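/- Let $X$ be a Banach lattice and suppose there is a constant $c$ with $0 < c < 2$ such that $c\,\|x + y\| \ge \|x\| + \|y\|$ for all disjoint $x, y \in X$. Then $X$ satisfies a lower $p$-estimate for some $1 \le p < \infty$: there exist $p \in [1, \infty)$ and a constant $K < \infty$ such that for every finite pairwise disjoint family $(x_i)_{1 \le i \le n}$ in $X$, $\big(\sum_{i=1}^{n} \|x_i\|^p\big)^{1/p} \le K \big\|\sum_{i=1}^{n} x_i\big\|$. -/

import Mathlib

section Lattice
variable {X : Type*} [NormedAddCommGroup X] [Lattice X] [HasSolidNorm X] [IsOrderedAddMonoid X]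

lemma my_add_inf_le {a b c : X} (ha : 0 ≤ a) (hb : 0 ≤ b) (hc : 0 ≤ c) :
    (a + b) ⊓ c ≤ a ⊓ c + b ⊓ c := by
  have h1 : (a + b) ⊓ c ≤ (a ⊓ c + b) ⊓ c := by
    refine le_inf ?_ inf_le_right
    calc (a + b) ⊓ c ≤ (a + b) ⊓ (c + b) := inf_le_inf_left _ (le_add_of_nonneg_right hb)
    _ = a ⊓ c + b := by rw [← inf_add]
  have h2 : (a ⊓ c + b) ⊓ c ≤ (a ⊓ c + b) ⊓ (a ⊓ c + c) :=
    inf_le_inf_left _ (le_add_of_nonneg_left (le_inf ha hc))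
  calc (a + b) ⊓ c ≤ (a ⊓ c + b) ⊓ (a ⊓ c + c) := h1.trans h2
  _ = a ⊓ c + b ⊓ c := by rw [← add_inf]

lemma my_sum_inf_eq_zero {ι : Type*} {s : Finset ι} {b : ι → X} {c : X} (hc : 0 ≤ c)
    (hb : ∀ i ∈ s, 0 ≤ b i) (h : ∀ i ∈ s, b i ⊓ c = 0) : (∑ i ∈ s, b i) ⊓ c = 0 := by
  classical
  induction s using Finset.induction_on with
  | empty => simp [inf_of_le_left hc]
  | @insert a s hi ih =>
    rw [Finset.sum_insert hi]
    have hbs : (0:X) ≤ ∑ i ∈ s, b i :=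
      Finset.sum_nonneg fun i his => hb i (Finset.mem_insert_of_mem his)
    have h1 := my_add_inf_le (hb a (Finset.mem_insert_self a s)) hbs hc
    have h2 : (0:X) ≤ (b a + ∑ i ∈ s, b i) ⊓ c :=
      le_inf (add_nonneg (hb a (Finset.mem_insert_self a s)) hbs) hc
    refine le_antisymm ?_ h2
    rw [h a (Finset.mem_insert_self a s), ih (fun i hii => hb i (Finset.mem_insert_of_mem hii))
      (fun i hii => h i (Finset.mem_insert_of_mem hii))] at h1
    simpa using h1

lemma my_abs_le_abs_add {x y : X} (h : |x| ⊓ |y| = 0) : |x| ≤ |x + y| := by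
  have h1 : |x| ≤ |x + y| + |y| := by
    calc |x| = |x + y + -y| := by congr 1; abel
    _ ≤ |x + y| + |-y| := abs_add_le _ _
    _ = |x + y| + |y| := by rw [abs_neg]
  calc |x| = (|x + y| + |y|) ⊓ |x| := (inf_of_le_right h1).symm
  _ ≤ |x + y| ⊓ |x| + |y| ⊓ |x| := my_add_inf_le (abs_nonneg _) (abs_nonneg _) (abs_nonneg _)
  _ = |x + y| ⊓ |x| + 0 := by rw [inf_comm |y| |x|, h]
  _ ≤ |x + y| := by simpa using inf_le_left

lemma my_abs_add_eq {x y : X} (h : |x| ⊓ |y| = 0) : |x + y| = |x| + |y| := by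
  have hx : |x| ≤ |x + y| := my_abs_le_abs_add h
  have hy : |y| ≤ |x + y| := by
    rw [add_comm]
    exact my_abs_le_abs_add (by rw [inf_comm]; exact h)
  refine le_antisymm (abs_add_le _ _) ?_
  calc |x| + |y| = |x| ⊓ |y| + (|x| ⊔ |y|) := (inf_add_sup _ _).symm
  _ = |x| ⊔ |y| := by rw [h, zero_add]
  _ ≤ |x + y| := sup_le hx hy

lemma my_abs_sum_le {ι : Type*} (s : Finset ι) (x : ι → X) :
    |∑ i ∈ s, x i| ≤ ∑ i ∈ s, |x i| := by
  classical
  induction s using Finset.induction_on with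
  | empty => simp
  | @insert a s hi ih =>
    rw [Finset.sum_insert hi, Finset.sum_insert hi]
    exact (abs_add_le _ _).trans (add_le_add_right ih _)

lemma my_abs_sum {ι : Type*} {s : Finset ι} {x : ι → X}
    (h : ∀ i ∈ s, ∀ j ∈ s, i ≠ j → |x i| ⊓ |x j| = 0) :
    |∑ i ∈ s, x i| = ∑ i ∈ s, |x i| := by
  classical
  induction s using Finset.induction_on with
  | empty => simp
  | @insert a s hi ih =>
    rw [Finset.sum_insert hi, Finset.sum_insert hi]
    have hd : |x a| ⊓ |∑ i ∈ s, x i| = 0 := by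
      have hz : (∑ i ∈ s, |x i|) ⊓ |x a| = 0 :=
        my_sum_inf_eq_zero (abs_nonneg _) (fun i _ => abs_nonneg _) (fun i his =>
          h i (Finset.mem_insert_of_mem his) a (Finset.mem_insert_self a s)
            (fun hh => hi (hh ▸ his)))
      refine le_antisymm ?_ (le_inf (abs_nonneg _) (abs_nonneg _))
      calc |x a| ⊓ |∑ i ∈ s, x i| ≤ (∑ i ∈ s, |x i|) ⊓ |x a| := by
            exact (inf_comm _ _).trans_le (inf_le_inf_right _ (my_abs_sum_le s x))
      _ = 0 := hz
    rw [my_abs_add_eq hd, ih (fun i hii j hjj hij =>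
      h i (Finset.mem_insert_of_mem hii) j (Finset.mem_insert_of_mem hjj) hij)]

/-- partial sums of disjoint families are dominated -/
lemma my_norm_subset_sum_le {ι : Type*} {s t : Finset ι} (hts : t ⊆ s) {x : ι → X}
    (h : ∀ i ∈ s, ∀ j ∈ s, i ≠ j → |x i| ⊓ |x j| = 0) :
    ‖∑ i ∈ t, x i‖ ≤ ‖∑ i ∈ s, x i‖ := by
  refine norm_le_norm_of_abs_le_abs ?_
  rw [my_abs_sum h]
  exact (my_abs_sum_le t x).trans (Finset.sum_le_sum_of_subset_of_nonneg hts
    (fun i _ _ => abs_nonneg _))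

end Lattice

section Doubling
variable {X : Type*} [NormedAddCommGroup X] [Lattice X] [HasSolidNorm X] [IsOrderedAddMonoid X]

lemma my_sum_sum_inf_eq_zero {ι : Type*} {s : Finset ι} {x : ι → X} {t u : Finset ι}
    (ht : t ⊆ s) (hu : u ⊆ s) (htu : Disjoint t u)
    (h : ∀ i ∈ s, ∀ j ∈ s, i ≠ j → |x i| ⊓ |x j| = 0) :
    |∑ i ∈ t, x i| ⊓ |∑ i ∈ u, x i| = 0 := by
  have key : (∑ i ∈ t, |x i|) ⊓ (∑ i ∈ u, |x i|) = 0 := by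
    refine my_sum_inf_eq_zero (Finset.sum_nonneg fun i _ => abs_nonneg _)
      (fun i _ => abs_nonneg _) (fun i hit => ?_)
    rw [inf_comm]
    refine my_sum_inf_eq_zero (abs_nonneg _) (fun j _ => abs_nonneg _) (fun j hju => ?_)
    exact h j (hu hju) i (ht hit) (fun hh => (Finset.disjoint_right.mp htu hju) (hh ▸ hit))
  refine le_antisymm ?_ (le_inf (abs_nonneg _) (abs_nonneg _))
  calc |∑ i ∈ t, x i| ⊓ |∑ i ∈ u, x i|
      ≤ (∑ i ∈ t, |x i|) ⊓ (∑ i ∈ u, |x i|) :=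
        inf_le_inf (my_abs_sum_le t x) (my_abs_sum_le u x)
  _ = 0 := key

lemma my_doubling {c : ℝ} (hc0 : 0 < c)
    (hest : ∀ x y : X, |x| ⊓ |y| = 0 → ‖x‖ + ‖y‖ ≤ c * ‖x + y‖) :
    ∀ (k : ℕ) {ι : Type*} (s : Finset ι) (x : ι → X), s.card ≤ 2 ^ k →
    (∀ i ∈ s, ∀ j ∈ s, i ≠ j → |x i| ⊓ |x j| = 0) →
    ∑ i ∈ s, ‖x i‖ ≤ c ^ k * ‖∑ i ∈ s, x i‖ := by
  intro k
  induction k with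
  | zero =>
    intro ι s x hcard _
    rw [pow_zero, one_mul]
    rcases s.eq_empty_or_nonempty with rfl | ⟨a, ha⟩
    · simp
    · have h1 := Finset.card_le_one.mp hcard
      have hs : s = {a} := Finset.eq_singleton_iff_unique_mem.mpr ⟨ha, fun b hb => h1 b hb a ha⟩
      subst hs; simp
  | succ k ih =>
    intro ι s x hcard h
    classical
    obtain ⟨t, hts, htcard⟩ := Finset.exists_subset_card_eq (s := s) (n := min (2 ^ k) s.card)
      (min_le_right _ _)
    set u := s \ t with hu
    have hus : u ⊆ s := Finset.sdiff_subset
    have htu : Disjoint t u := Finset.disjoint_sdiff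
    have hucard : u.card ≤ 2 ^ k := by
      have h1 : u.card = s.card - t.card := by rw [hu]; exact Finset.card_sdiff_of_subset hts
      have hp : (2:ℕ) ^ (k+1) = 2 ^ k + 2 ^ k := by ring
      rcases le_total (2 ^ k) s.card with hle | hle
      · rw [min_eq_left hle] at htcard; omega
      · rw [min_eq_right hle] at htcard; omega
    have htcard' : t.card ≤ 2 ^ k := htcard.le.trans (min_le_left _ _)
    have hT := ih t x htcard' (fun i hi j hj => h i (hts hi) j (hts hj))
    have hU := ih u x hucard (fun i hi j hj => h i (hus hi) j (hus hj))
    have hdis := my_sum_sum_inf_eq_zero hts hus htu h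
    have hTU := hest _ _ hdis
    have hsplit : ∑ i ∈ t, x i + ∑ i ∈ u, x i = ∑ i ∈ s, x i := by
      rw [hu, add_comm]; exact Finset.sum_sdiff hts
    have hsplit' : ∑ i ∈ s, ‖x i‖ = ∑ i ∈ t, ‖x i‖ + ∑ i ∈ u, ‖x i‖ := by
      rw [hu, add_comm]; exact (Finset.sum_sdiff hts).symm
    have hck : (0:ℝ) ≤ c ^ k := (pow_pos hc0 k).le
    calc ∑ i ∈ s, ‖x i‖ = ∑ i ∈ t, ‖x i‖ + ∑ i ∈ u, ‖x i‖ := hsplit'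
    _ ≤ c ^ k * ‖∑ i ∈ t, x i‖ + c ^ k * ‖∑ i ∈ u, x i‖ := add_le_add hT hU
    _ = c ^ k * (‖∑ i ∈ t, x i‖ + ‖∑ i ∈ u, x i‖) := by ring
    _ ≤ c ^ k * (c * ‖∑ i ∈ t, x i + ∑ i ∈ u, x i‖) := by
        exact mul_le_mul_of_nonneg_left hTU hck
    _ = c ^ (k+1) * ‖∑ i ∈ s, x i‖ := by rw [hsplit]; ring

end Doubling


section Aux

lemma my_clog_pow_le {c : ℝ} (hc0 : 0 < c) {m : ℕ} (hm : 1 ≤ m) :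
    c ^ (Nat.clog 2 m) ≤ max c 1 * (m:ℝ) ^ (Real.logb 2 c) := by
  set θ := Real.logb 2 c with hθ
  have h2θ : (2:ℝ) ^ θ = c := Real.rpow_logb (by norm_num) (by norm_num) hc0
  set k0 := Nat.clog 2 m with hk0
  have hmle : (m:ℝ) ≤ (2:ℝ) ^ (k0:ℝ) := by
    rw [Real.rpow_natCast]
    exact_mod_cast Nat.le_pow_clog one_lt_two m
  have hup : (2:ℝ) ^ (k0:ℝ) ≤ 2 * m := by
    rw [Real.rpow_natCast]
    have : (2:ℕ) ^ k0 ≤ 2 * m := by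
      rcases eq_or_lt_of_le hm with h1 | h2
      · rw [hk0, ← h1]; simp [Nat.clog_one_right]
      · have hlt : (2:ℕ) ^ (k0 - 1) < m := by
          simpa [hk0, Nat.pred_eq_sub_one] using Nat.pow_pred_clog_lt_self (b := 2) one_lt_two h2
        have hpos := Nat.clog_pos (b := 2) one_lt_two h2
        have : (2:ℕ) ^ k0 = 2 * 2 ^ (k0 - 1) := by
          rw [← pow_succ']
          congr 1
          omega
        omega
    exact_mod_cast this
  have hmpos : (0:ℝ) < (m:ℝ) := by exact_mod_cast hm
  have hmθ : (0:ℝ) ≤ (m:ℝ) ^ θ := Real.rpow_nonneg hmpos.le _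
  have hcpow : c ^ k0 = (2:ℝ) ^ (θ * (k0:ℝ)) := by
    rw [Real.rpow_mul (by norm_num), h2θ, Real.rpow_natCast]
  rcases le_or_gt 0 θ with hθ0 | hθ0
  · calc c ^ k0 = ((2:ℝ) ^ ((k0:ℝ)) : ℝ) ^ θ := by
          rw [hcpow, mul_comm θ, Real.rpow_mul (by norm_num : (0:ℝ) ≤ 2)]
    _ ≤ ((2:ℝ) * m) ^ θ := by
        refine Real.rpow_le_rpow (Real.rpow_nonneg (by norm_num) _) hup hθ0
    _ = (2:ℝ) ^ θ * (m:ℝ) ^ θ := Real.mul_rpow (by norm_num) hmpos.le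
    _ = c * (m:ℝ) ^ θ := by rw [h2θ]
    _ ≤ max c 1 * (m:ℝ) ^ θ := mul_le_mul_of_nonneg_right (le_max_left _ _) hmθ
  · calc c ^ k0 = ((2:ℝ) ^ ((k0:ℝ)) : ℝ) ^ θ := by
          rw [hcpow, mul_comm θ, Real.rpow_mul (by norm_num : (0:ℝ) ≤ 2)]
    _ ≤ (m:ℝ) ^ θ := Real.rpow_le_rpow_of_nonpos hmpos hmle hθ0.le
    _ = 1 * (m:ℝ) ^ θ := (one_mul _).symm
    _ ≤ max c 1 * (m:ℝ) ^ θ := mul_le_mul_of_nonneg_right (le_max_right _ _) hmθ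

end Aux


/-- Let `X` be a Banach lattice and `0 < c < 2` a constant such that
`‖x‖ + ‖y‖ ≤ c‖x + y‖` for all disjoint `x, y`. Then `X` satisfies a lower
`p`-estimate for some `1 ≤ p < ∞`: there are `p ∈ [1, ∞)` and `K` such that
`(∑ ‖xᵢ‖^p)^(1/p) ≤ K ‖∑ xᵢ‖` for every finite pairwise disjoint family. -/
theorem lower_p_estimate_of_two_disjoint_estimate {X : Type*}
    [NormedAddCommGroup X] [Lattice X] [HasSolidNorm X] [IsOrderedAddMonoid X]
    [CompleteSpace X] (c : ℝ) (hc0 : 0 < c) (hc2 : c < 2)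
    (hest : ∀ x y : X, |x| ⊓ |y| = 0 → ‖x‖ + ‖y‖ ≤ c * ‖x + y‖) :
    ∃ p : ℝ, 1 ≤ p ∧ ∃ K : ℝ, ∀ (n : ℕ) (x : Fin n → X),
      (Pairwise fun i j => |x i| ⊓ |x j| = 0) →
      (∑ i, ‖x i‖ ^ p) ^ (1 / p) ≤ K * ‖∑ i, x i‖ := by
  classical
  set θ := Real.logb 2 c with hθdef
  have hθ1 : θ < 1 := by
    rw [hθdef]
    calc Real.logb 2 c < Real.logb 2 2 := Real.logb_lt_logb (by norm_num) hc0 hc2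
    _ = 1 := Real.logb_self_eq_one (by norm_num)
  have hθ1' : 0 < 1 - θ := by linarith
  set p := max 1 (2 / (1 - θ)) with hpdef
  have hp1 : (1:ℝ) ≤ p := le_max_left _ _
  have hp0 : (0:ℝ) < p := lt_of_lt_of_le one_pos hp1
  set q := (1 - θ) * p with hqdef
  have hq2 : (2:ℝ) ≤ q := by
    have h2p : 2 / (1-θ) ≤ p := le_max_right _ _
    calc (2:ℝ) = (1-θ) * (2/(1-θ)) := by field_simp
    _ ≤ (1-θ) * p := mul_le_mul_of_nonneg_left h2p hθ1'.le
  set C0 := max c 1 with hC0def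
  have hC0pos : (0:ℝ) < C0 := lt_of_lt_of_le one_pos (le_max_right _ _)
  have hsum : Summable (fun k : ℕ => ((k:ℝ) + 1) ^ (-q)) := by
    have h1 : Summable (fun k : ℕ => ((k:ℝ)) ^ (-q)) := Real.summable_nat_rpow.mpr (by linarith)
    have h2 : Summable (fun n : ℕ => (((n + 1 : ℕ)):ℝ) ^ (-q)) := (summable_nat_add_iff 1).mpr h1
    refine h2.congr ?_
    intro n; push_cast; ring_nf
  set T := ∑' k : ℕ, ((k:ℝ) + 1) ^ (-q) with hTdef
  have hTnonneg : (0:ℝ) ≤ T := tsum_nonneg fun k => Real.rpow_nonneg (by positivity) _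
  refine ⟨p, hp1, C0 * T ^ (1/p), ?_⟩
  intro n x hP
  set σ := Tuple.sort (fun i => -‖x i‖) with hσdef
  set y := fun i => x (σ i) with hydef
  have hyP : ∀ i j : Fin n, i ≠ j → |y i| ⊓ |y j| = 0 :=
    fun i j hij => hP (fun hh : σ i = σ j => hij (σ.injective hh))
  have hmono : Monotone ((fun i => -‖x i‖) ∘ σ) := by rw [hσdef]; exact Tuple.monotone_sort _
  have hanti : ∀ i j : Fin n, j ≤ i → ‖y i‖ ≤ ‖y j‖ := by
    intro i j hji
    have := hmono hji
    simpa [hydef] using neg_le_neg_iff.mp this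
  have hSsum : ∑ i, y i = ∑ i, x i := Equiv.sum_comp σ x
  set S := ‖∑ i, x i‖ with hSdef
  have hSnonneg : (0:ℝ) ≤ S := norm_nonneg _
  have hkey : ∀ i : Fin n, ‖y i‖ ≤ C0 * (((i:ℕ):ℝ) + 1) ^ (θ - 1) * S := by
    intro i
    set m := (i:ℕ) + 1 with hmdef
    have hm1 : 1 ≤ m := Nat.succ_le_succ (Nat.zero_le _)
    have hmpos : (0:ℝ) < (m:ℝ) := by exact_mod_cast hm1
    set A := Finset.Iic i with hA
    have hcardA : A.card = m := by rw [hA, hmdef]; exact Fin.card_Iic i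
    have h1 : (m:ℝ) * ‖y i‖ ≤ ∑ j ∈ A, ‖y j‖ := by
      calc (m:ℝ) * ‖y i‖ = ∑ _j ∈ A, ‖y i‖ := by
            rw [Finset.sum_const, nsmul_eq_mul, hcardA]
      _ ≤ ∑ j ∈ A, ‖y j‖ := Finset.sum_le_sum fun j hj => hanti i j (Finset.mem_Iic.mp hj)
    have h2 : ∑ j ∈ A, ‖y j‖ ≤ c ^ (Nat.clog 2 m) * ‖∑ j ∈ A, y j‖ :=
      my_doubling hc0 hest _ A y (by rw [hcardA]; exact Nat.le_pow_clog one_lt_two m)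
        (fun a _ b _ hab => hyP a b hab)
    have h3 : ‖∑ j ∈ A, y j‖ ≤ S := by
      rw [hSdef, ← hSsum]
      exact my_norm_subset_sum_le (Finset.subset_univ A) (fun a _ b _ hab => hyP a b hab)
    have h4 : (m:ℝ) * ‖y i‖ ≤ c ^ (Nat.clog 2 m) * S :=
      h1.trans (h2.trans (mul_le_mul_of_nonneg_left h3 (pow_pos hc0 _).le))
    have h5 : c ^ (Nat.clog 2 m) ≤ C0 * (m:ℝ) ^ θ := my_clog_pow_le hc0 hm1
    have h6 : ‖y i‖ ≤ C0 * (m:ℝ)^θ * S / m := by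
      rw [le_div_iff₀ hmpos]
      calc ‖y i‖ * m = m * ‖y i‖ := mul_comm _ _
      _ ≤ c ^ (Nat.clog 2 m) * S := h4
      _ ≤ C0 * (m:ℝ)^θ * S := mul_le_mul_of_nonneg_right h5 hSnonneg
    have hcast : ((m:ℕ):ℝ) = ((i:ℕ):ℝ) + 1 := by rw [hmdef]; push_cast; ring
    calc ‖y i‖ ≤ C0 * (m:ℝ)^θ * S / m := h6
    _ = C0 * (m:ℝ)^(θ-1) * S := by
        rw [Real.rpow_sub_one (ne_of_gt hmpos)]; ring
    _ = C0 * (((i:ℕ):ℝ) + 1) ^ (θ - 1) * S := by rw [hcast]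
  have hterm : ∀ i : Fin n, ‖y i‖ ^ p ≤ C0^p * S^p * (((i:ℕ):ℝ) + 1)^(-q) := by
    intro i
    have hb1 : (0:ℝ) ≤ (((i:ℕ):ℝ) + 1) ^ (θ - 1) := Real.rpow_nonneg (by positivity) _
    calc ‖y i‖ ^ p ≤ (C0 * (((i:ℕ):ℝ) + 1) ^ (θ - 1) * S) ^ p :=
          Real.rpow_le_rpow (norm_nonneg _) (hkey i) hp0.le
    _ = C0^p * ((((i:ℕ):ℝ) + 1) ^ (θ - 1))^p * S^p := by
        rw [Real.mul_rpow (by positivity) hSnonneg, Real.mul_rpow hC0pos.le hb1]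
    _ = C0^p * S^p * (((i:ℕ):ℝ) + 1)^(-q) := by
        rw [← Real.rpow_mul (by positivity : (0:ℝ) ≤ ((i:ℕ):ℝ) + 1)]
        have hq' : (θ-1)*p = -q := by rw [hqdef]; ring
        rw [hq']; ring
  have hsum1 : ∑ i, ‖x i‖ ^ p = ∑ i, ‖y i‖ ^ p :=
    (Equiv.sum_comp σ (fun i => ‖x i‖ ^ p)).symm
  have hsum2 : ∑ i : Fin n, (((i:ℕ):ℝ) + 1)^(-q) ≤ T := by
    have he : ∑ i : Fin n, (((i:ℕ):ℝ) + 1)^(-q)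
        = ∑ k ∈ Finset.range n, (((k:ℕ):ℝ) + 1)^(-q) :=
      Fin.sum_univ_eq_sum_range (fun k => (((k:ℕ):ℝ) + 1)^(-q)) n
    rw [he, hTdef]
    exact Summable.sum_le_tsum (Finset.range n) (fun k _ => Real.rpow_nonneg (by positivity) _) hsum
  have htotal : ∑ i, ‖y i‖^p ≤ C0^p * S^p * T := by
    calc ∑ i, ‖y i‖^p ≤ ∑ i : Fin n, C0^p * S^p * (((i:ℕ):ℝ) + 1)^(-q) :=
          Finset.sum_le_sum fun i _ => hterm i
    _ = C0^p * S^p * ∑ i : Fin n, (((i:ℕ):ℝ) + 1)^(-q) := by rw [← Finset.mul_sum]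
    _ ≤ C0^p * S^p * T := by
        refine mul_le_mul_of_nonneg_left hsum2 ?_
        positivity
  have hfinal : (∑ i, ‖x i‖^p)^(1/p) ≤ (C0^p * S^p * T)^(1/p) := by
    rw [hsum1]
    exact Real.rpow_le_rpow
      (Finset.sum_nonneg fun i _ => Real.rpow_nonneg (norm_nonneg _) _) htotal (by positivity)
  have hrhs : (C0^p * S^p * T)^(1/p) = C0 * T^(1/p) * S := by
    rw [Real.mul_rpow (by positivity) hTnonneg,
      Real.mul_rpow (by positivity) (by positivity),
      ← Real.rpow_mul hC0pos.le, ← Real.rpow_mul hSnonneg,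
      mul_one_div_cancel (ne_of_gt hp0), Real.rpow_one, Real.rpow_one]
    ring
  exact hfinal.trans_eq (by rw [hrhs])
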